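/- arXiv:0712.2403 — 6 statements merged into one kernel-verified Lean document; each statement's English description precedes it below -/
import Mathlib

section
/- Let t_1,...,t_k be integers and A the k×k companion matrix of X^k - t_1 X^{k-1} - ... - t_k over Z/pZ, with p prime not dividing t_k. Then the recursion {f_n mod p} (generalized Fibonacci sequence) is periodic with period exactly equal to the order of A in GL_k(Z/pZ). -/
/-- The companion matrix of `X^k - t_1 X^{k-1} - ... - t_k`: superdiagonal 1's and
last row `(t_k, t_{k-1}, ..., t_1)` (with `t j` denoting `t_{j+1}`). -/
def companion {R : Type*} [CommRing R] (k : ℕ) (t : Fin k → R) :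
    Matrix (Fin k) (Fin k) R :=
  Matrix.of fun i j =>
    if (i : ℕ) + 1 = k then t j.rev
    else if (j : ℕ) = (i : ℕ) + 1 then 1 else 0

/-- If `p ∤ t_k`, the generalized Fibonacci sequence mod `p` is periodic
with least period exactly the order of the companion matrix `A` in `GL_k(ℤ/p)`. -/
theorem gfp_period_eq_orderOf_companion
    (k : ℕ) (hk : 1 ≤ k) (t : Fin k → ℤ) (f : ℕ → ℤ)
    (h0 : ∀ j, j < k - 1 → f j = 0) (h1 : f (k - 1) = 1)
    (hrec : ∀ n, k ≤ n → f n = ∑ j : Fin k, t j * f (n - 1 - (j : ℕ)))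
    (p : ℕ) (hp : p.Prime) (hpt : ¬ (p : ℤ) ∣ t ⟨k - 1, by omega⟩) :
    IsLeast {c : ℕ | 0 < c ∧ ∀ n, ((f (n + c) : ZMod p) = (f n : ZMod p))}
      (orderOf (companion k fun j => ((t j : ZMod p)))) := by
  haveI : Fact p.Prime := ⟨hp⟩
  set A : Matrix (Fin k) (Fin k) (ZMod p) := companion k fun j => ((t j : ZMod p)) with hA
  set F : ℕ → ZMod p := fun n => ((f n : ZMod p)) with hFdef
  have hF0 : ∀ n, n < k - 1 → F n = 0 := by
    intro n hn; simp [hFdef, h0 n hn]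
  have hF1 : F (k - 1) = 1 := by simp [hFdef, h1]
  set v : ℕ → Fin k → ZMod p := fun n i => F (n + i) with hvdef
  have htk : (t ⟨k - 1, by omega⟩ : ZMod p) ≠ 0 := by
    intro h
    exact hpt ((ZMod.intCast_zmod_eq_zero_iff_dvd _ p).mp h)
  -- step lemma
  have hstep : ∀ n, A.mulVec (v n) = v (n + 1) := by
    intro n
    funext i
    rcases eq_or_ne ((i : ℕ) + 1) k with hi | hi
    · -- last row
      have hrow : ∀ j : Fin k, A i j = (t j.rev : ZMod p) := by
        intro j; simp [hA, companion, hi]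
      have hval : f (n + k) = ∑ j : Fin k, t j * f (n + k - 1 - (j : ℕ)) :=
        hrec (n + k) (by omega)
      have hcast : F (n + k) = ∑ j : Fin k, (t j : ZMod p) * F (n + k - 1 - (j : ℕ)) := by
        simp only [hFdef]
        rw [hval]; push_cast; ring
      have hsum : ∑ j : Fin k, (t j : ZMod p) * F (n + k - 1 - (j : ℕ))
          = ∑ j, A i j * v n j := by
        apply Fintype.sum_equiv Fin.revPerm
        intro x
        rw [Fin.revPerm_apply, hrow, Fin.rev_rev]
        simp only [hvdef]
        congr 2
        have := x.isLt
        simp [Fin.val_rev]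
        omega
      have hmv : A.mulVec (v n) i = ∑ j, A i j * v n j := rfl
      rw [hmv, ← hsum, ← hcast]
      simp only [hvdef]
      congr 1
      omega
    · -- shift row
      have hlt : (i : ℕ) + 1 < k := by have := i.isLt; omega
      have hrow : ∀ j : Fin k, A i j = if (j : ℕ) = (i : ℕ) + 1 then 1 else 0 := by
        intro j; simp [hA, companion, hi]
      have hmv : A.mulVec (v n) i = ∑ j, A i j * v n j := rfl
      rw [hmv, Finset.sum_eq_single (⟨(i : ℕ) + 1, hlt⟩ : Fin k)]
      · have h1 : A i ⟨(i : ℕ) + 1, hlt⟩ = 1 := by rw [hrow]; simp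
        rw [h1, one_mul]
        simp only [hvdef]
        congr 1
        omega
      · intro b _ hb
        rw [hrow]
        have : (b : ℕ) ≠ (i : ℕ) + 1 := fun h => hb (Fin.ext h)
        simp [this]
      · intro h; exact absurd (Finset.mem_univ _) h
  have hiter : ∀ m n, (A ^ m).mulVec (v n) = v (n + m) := by
    intro m
    induction m with
    | zero => intro n; simp [Matrix.one_mulVec]
    | succ m ih =>
      intro n
      rw [pow_succ', ← Matrix.mulVec_mulVec, ih, hstep]
      rfl
  -- the Hankel matrix
  set M : Matrix (Fin k) (Fin k) (ZMod p) := Matrix.of fun i j => F ((i : ℕ) + (j : ℕ)) with hMdef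
  have hMcol : ∀ j : Fin k, (fun l => M l j) = v (j : ℕ) := by
    intro j; funext l
    simp only [hMdef, Matrix.of_apply, hvdef]
    congr 1
    omega
  have hMunit : IsUnit M := by
    have hT : (M.submatrix id Fin.revPerm).BlockTriangular OrderDual.toDual := by
      intro i j hij
      have hij' : (i : ℕ) < (j : ℕ) := hij
      simp only [Matrix.submatrix_apply, id, Fin.revPerm_apply, hMdef, Matrix.of_apply]
      apply hF0
      have hj := j.isLt
      simp [Fin.val_rev]
      omega
    have hdiag : ∀ i : Fin k, (M.submatrix id Fin.revPerm) i i = 1 := by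
      intro i
      simp only [Matrix.submatrix_apply, id, Fin.revPerm_apply, hMdef, Matrix.of_apply]
      have hi := i.isLt
      have heq : (i : ℕ) + (i.rev : ℕ) = k - 1 := by simp [Fin.val_rev]; omega
      rw [heq, hF1]
    have hdet : (M.submatrix id Fin.revPerm).det = 1 := by
      rw [Matrix.det_of_lowerTriangular _ hT]
      exact Finset.prod_eq_one (fun i _ => hdiag i)
    rw [Matrix.det_permute' Fin.revPerm M] at hdet
    rw [Matrix.isUnit_iff_isUnit_det]
    exact IsUnit.of_mul_eq_one _ (by rw [mul_comm] at hdet; exact hdet)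
  -- A is a unit
  have hAunit : IsUnit A := by
    rw [← Matrix.mulVec_injective_iff_isUnit]
    have hker : ∀ x : Fin k → ZMod p, A.mulVec x = 0 → x = 0 := by
      intro x hx
      have hx' : ∀ j : Fin k, (j : ℕ) ≠ 0 → x j = 0 := by
        intro j hj
        have hj1 : (j : ℕ) - 1 < k := by omega
        have hthis := congr_fun hx ⟨(j : ℕ) - 1, hj1⟩
        have hmv : A.mulVec x ⟨(j : ℕ) - 1, hj1⟩ = ∑ b, A ⟨(j : ℕ) - 1, hj1⟩ b * x b := rfl
        rw [hmv, Finset.sum_eq_single j] at hthis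
        · have hentry : A ⟨(j : ℕ) - 1, hj1⟩ j = 1 := by
            show companion k (fun j => ((t j : ZMod p))) _ _ = _
            unfold companion
            rw [Matrix.of_apply,
              if_neg (by have := j.isLt; simp only [Fin.val_mk]; omega),
              if_pos (by simp only [Fin.val_mk]; omega)]
          rw [hentry, one_mul] at hthis
          simpa using hthis
        · intro b _ hb
          have hbj : (b : ℕ) ≠ (j : ℕ) - 1 + 1 := by
            intro h; exact hb (Fin.ext (by omega))
          have hentry : A ⟨(j : ℕ) - 1, hj1⟩ b = 0 := by
            show companion k (fun j => ((t j : ZMod p))) _ _ = _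
            unfold companion
            rw [Matrix.of_apply,
              if_neg (by have := j.isLt; simp only [Fin.val_mk]; omega),
              if_neg (by simpa using hbj)]
          rw [hentry, zero_mul]
        · intro h; exact absurd (Finset.mem_univ _) h
      funext j
      rcases eq_or_ne (j : ℕ) 0 with hj | hj
      · have hthis := congr_fun hx ⟨k - 1, by omega⟩
        have hmv : A.mulVec x ⟨k - 1, by omega⟩ = ∑ b, A ⟨k - 1, by omega⟩ b * x b := rfl
        rw [hmv] at hthis
        have hsum : ∀ b : Fin k, A ⟨k - 1, by omega⟩ b * x b
            = if b = j then (t ⟨k - 1, by omega⟩ : ZMod p) * x j else 0 := by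
          intro b
          rcases eq_or_ne b j with hb | hb
          · subst hb
            rw [if_pos rfl]
            have hlast : A ⟨k - 1, by omega⟩ b = (t b.rev : ZMod p) := by
              show companion k (fun j => ((t j : ZMod p))) ⟨k - 1, by omega⟩ b = _
              unfold companion
              rw [Matrix.of_apply, if_pos (by simp; omega)]
            rw [hlast]
            have hbrev : b.rev = ⟨k - 1, by omega⟩ := by
              apply Fin.ext
              simp [Fin.val_rev]
              omega
            rw [hbrev]
          · rw [if_neg hb]
            have hb0 : (b : ℕ) ≠ 0 := by
              intro h; exact hb (Fin.ext (by omega))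
            rw [hx' b hb0, mul_zero]
        rw [Finset.sum_congr rfl (fun b _ => hsum b)] at hthis
        rw [Finset.sum_ite_eq' Finset.univ j] at hthis
        simp only [Finset.mem_univ, if_true] at hthis
        exact (mul_eq_zero.mp hthis).resolve_left htk
      · exact hx' j hj
    intro x y hxy
    have hz := hker (x - y) (by rw [Matrix.mulVec_sub, hxy, sub_self])
    exact sub_eq_zero.mp hz
  have hApos : 0 < orderOf A := by
    obtain ⟨u, hu⟩ := hAunit
    rw [← hu, orderOf_units]
    exact orderOf_pos u
  constructor
  · -- membership
    refine ⟨hApos, fun n => ?_⟩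
    have hth := hiter (orderOf A) n
    rw [pow_orderOf_eq_one, Matrix.one_mulVec] at hth
    have h2 := congr_fun hth ⟨0, by omega⟩
    simpa [hvdef] using h2.symm
  · -- lower bound
    rintro c ⟨hc, hper⟩
    have hvper : ∀ n, v (n + c) = v n := by
      intro n; funext i
      simp only [hvdef]
      have hh := hper (n + i)
      rw [show n + c + (i : ℕ) = n + (i : ℕ) + c by ring]
      exact hh
    have hfix : A ^ c * M = M := by
      apply Matrix.ext
      intro i j
      have h1 : (A ^ c * M) i j = ((A ^ c).mulVec (fun l => M l j)) i := by
        simp [Matrix.mul_apply, Matrix.mulVec, dotProduct]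
      rw [h1, hMcol, hiter]
      have : ((j : ℕ) + c) = (j : ℕ) + c := rfl
      rw [hvper]
      simp only [hvdef, hMdef, Matrix.of_apply]
      congr 1
      omega
    have hpow : A ^ c = 1 := by
      have hMinv : M * M⁻¹ = 1 := Matrix.mul_nonsing_inv M
        ((Matrix.isUnit_iff_isUnit_det M).mp hMunit)
      calc A ^ c = A ^ c * (M * M⁻¹) := by rw [hMinv, mul_one]
        _ = (A ^ c * M) * M⁻¹ := by rw [Matrix.mul_assoc]
        _ = M * M⁻¹ := by rw [hfix]
        _ = 1 := hMinv
    exact Nat.le_of_dvd hc (orderOf_dvd_of_pow_eq_one hpow)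
end

section
/- Let A be the companion matrix of X^k - t_1 X^{k-1} - ... - t_k over a commutative ring. For every n ≥ 0, the trace of A^n equals the generalized Lucas polynomial G_{k,n}(t_1,...,t_k), i.e., the sum of λ_i^n over the roots λ_i of the polynomial; equivalently tr(A^n) is the isobaric reflect of the n-th power sum symmetric polynomial evaluated at (t_1,...,t_k). -/
open Polynomial in
/-- Signed coefficients of `∏ (X - lam i)`. -/
noncomputable def coreCoeff {R : Type*} [CommRing R] (k : ℕ) (lam : Fin k → R) (j : Fin k) : R :=
  -((∏ i : Fin k, (X - C (lam i))).coeff (k - 1 - (j : ℕ)))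

open Polynomial in
lemma core_eq_prod {R : Type*} [CommRing R] (k : ℕ) (lam : Fin k → R) :
    (X ^ k - ∑ j : Fin k, C (coreCoeff k lam j) * X ^ (k - 1 - (j : ℕ))) =
      ∏ i : Fin k, (X - C (lam i)) := by
  nontriviality R
  set P := ∏ i : Fin k, (X - C (lam i)) with hP
  have hm : P.Monic := monic_prod_of_monic _ _ fun i _ => monic_X_sub_C _
  have hdeg : P.natDegree = k := by
    rw [hP, natDegree_prod_of_monic _ _ fun i _ => monic_X_sub_C _]
    simp [natDegree_X_sub_C]
  have h1 : ∑ j : Fin k, C (coreCoeff k lam j) * X ^ (k - 1 - (j : ℕ)) =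
      ∑ j ∈ Finset.range k, C (-(P.coeff (k - 1 - j))) * X ^ (k - 1 - j) :=
    Fin.sum_univ_eq_sum_range (fun j => C (-(P.coeff (k - 1 - j))) * X ^ (k - 1 - j)) k
  have h2 : ∑ j ∈ Finset.range k, C (-(P.coeff (k - 1 - j))) * X ^ (k - 1 - j) =
      ∑ j ∈ Finset.range k, C (-(P.coeff j)) * X ^ j :=
    Finset.sum_range_reflect (fun j => C (-(P.coeff j)) * X ^ j) k
  rw [h1, h2]
  have h3 : ∑ j ∈ Finset.range k, C (-(P.coeff j)) * X ^ j =
      -∑ j ∈ Finset.range k, C (P.coeff j) * X ^ j := by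
    rw [← Finset.sum_neg_distrib]
    exact Finset.sum_congr rfl fun j _ => by rw [map_neg, neg_mul]
  rw [h3, sub_neg_eq_add]
  conv_rhs => rw [hm.as_sum, hdeg]

open Polynomial in
lemma core_coeff_eq {R : Type*} [CommRing R] (k : ℕ) (t : Fin k → R) (j0 : Fin k) :
    (X ^ k - ∑ j : Fin k, C (t j) * X ^ (k - 1 - (j : ℕ))).coeff (k - 1 - (j0 : ℕ)) =
      -t j0 := by
  have hj0 : (j0 : ℕ) < k := j0.isLt
  rw [coeff_sub, coeff_X_pow, if_neg (by omega), finset_sum_coeff]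
  have : ∀ j : Fin k, (C (t j) * X ^ (k - 1 - (j : ℕ))).coeff (k - 1 - (j0 : ℕ)) =
      if j = j0 then t j0 else 0 := by
    intro j
    rw [coeff_C_mul, coeff_X_pow]
    have hj : (j : ℕ) < k := j.isLt
    by_cases h : j = j0
    · subst h; simp
    · have hne : ¬ (k - 1 - (j0 : ℕ) = k - 1 - (j : ℕ)) := by
        intro hc
        exact h (Fin.ext (by omega)).symm
      simp [hne, h]
  rw [Finset.sum_congr rfl fun j _ => this j]
  simp

lemma companion_map {R S : Type*} [CommRing R] [CommRing S] (f : R →+* S) (k : ℕ)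
    (t : Fin k → R) : f.mapMatrix (companion k t) = companion k (f ∘ t) := by
  ext i j
  simp only [RingHom.mapMatrix_apply, Matrix.map_apply, companion, Matrix.of_apply]
  split_ifs <;> simp

lemma trace_mapMatrix {R S : Type*} [CommRing R] [CommRing S] (f : R →+* S) {n : Type*}
    [Fintype n] [DecidableEq n] (M : Matrix n n R) :
    (f.mapMatrix M).trace = f M.trace := by
  simp [Matrix.trace, map_sum]

/-- The field case: companion matrix is diagonalized by the Vandermonde matrix. -/
lemma field_case {K : Type*} [Field K] (k : ℕ) (t lam : Fin k → K)
    (hd : Function.Injective lam)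
    (hroot : ∀ i : Fin k, lam i ^ k = ∑ j : Fin k, t j * lam i ^ (k - 1 - (j : ℕ))) :
    ∀ n : ℕ, (companion k t ^ n).trace = ∑ i : Fin k, lam i ^ n := by
  set W : Matrix (Fin k) (Fin k) K := (Matrix.vandermonde lam).transpose with hWdef
  have hW : companion k t * W = W * Matrix.diagonal lam := by
    ext i j
    rw [Matrix.mul_diagonal, Matrix.mul_apply]
    simp only [hWdef, Matrix.transpose_apply, Matrix.vandermonde, companion, Matrix.of_apply]
    by_cases hik : (i : ℕ) + 1 = k
    · simp only [if_pos hik]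
      have hv : ∀ m : Fin k, ((m.rev : Fin k) : ℕ) = k - 1 - (m : ℕ) := by
        intro m; rw [Fin.val_rev]; omega
      have hrev : ∑ m : Fin k, t m.rev * lam j ^ (m : ℕ) =
          ∑ m : Fin k, t m * lam j ^ ((m.rev : Fin k) : ℕ) := by
        rw [← Equiv.sum_comp Fin.revPerm
          (fun m : Fin k => t m * lam j ^ ((m.rev : Fin k) : ℕ))]
        simp [Fin.rev_rev]
      calc ∑ m : Fin k, t m.rev * lam j ^ (m : ℕ)
          = ∑ m : Fin k, t m * lam j ^ (k - 1 - (m : ℕ)) := by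
            rw [hrev]; exact Finset.sum_congr rfl fun m _ => by rw [hv]
        _ = lam j ^ k := (hroot j).symm
        _ = lam j ^ (i : ℕ) * lam j := by rw [← pow_succ]; congr 1; omega
    · simp only [if_neg hik]
      have hlt : (i : ℕ) + 1 < k := lt_of_le_of_ne i.isLt.nat_succ_le hik
      have hcond : ∀ m : Fin k,
          (if (m : ℕ) = (i : ℕ) + 1 then (1 : K) else 0) * lam j ^ (m : ℕ) =
          if m = (⟨(i : ℕ) + 1, hlt⟩ : Fin k) then lam j ^ ((i : ℕ) + 1) else 0 := by
        intro m
        by_cases h : (m : ℕ) = (i : ℕ) + 1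
        · rw [if_pos h, if_pos (Fin.ext h), one_mul, h]
        · rw [if_neg h, if_neg (fun hc => h (by rw [hc])), zero_mul]
      rw [Finset.sum_congr rfl fun m _ => hcond m, Finset.sum_ite_eq' Finset.univ]
      simp [pow_succ]
  have hdet : IsUnit W.det := by
    rw [hWdef, Matrix.det_transpose, Matrix.det_vandermonde, isUnit_iff_ne_zero]
    rw [Finset.prod_ne_zero_iff]
    intro i _
    rw [Finset.prod_ne_zero_iff]
    intro j hj
    rw [Finset.mem_Ioi] at hj
    exact sub_ne_zero.2 fun hc => absurd (hd hc) (ne_of_gt hj)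
  have hWn : ∀ n : ℕ, companion k t ^ n * W = W * Matrix.diagonal lam ^ n := by
    intro n
    induction n with
    | zero => simp
    | succ n ih =>
      rw [pow_succ, pow_succ, Matrix.mul_assoc, hW, ← Matrix.mul_assoc, ih, Matrix.mul_assoc]
  intro n
  have hA : companion k t ^ n = W * Matrix.diagonal lam ^ n * W⁻¹ := by
    rw [← hWn n, Matrix.mul_assoc, Matrix.mul_nonsing_inv W hdet, Matrix.mul_one]
  rw [hA, Matrix.trace_mul_comm, ← Matrix.mul_assoc, Matrix.nonsing_inv_mul W hdet,
    Matrix.one_mul, Matrix.diagonal_pow, Matrix.trace_diagonal]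
  simp

/-- The generic case over `MvPolynomial (Fin k) ℤ`. -/
lemma generic_case (k : ℕ) (n : ℕ) :
    (companion k (coreCoeff k (MvPolynomial.X : Fin k → MvPolynomial (Fin k) ℤ)) ^ n).trace =
      ∑ i : Fin k, (MvPolynomial.X i : MvPolynomial (Fin k) ℤ) ^ n := by
  set S := MvPolynomial (Fin k) ℤ with hS
  set K := FractionRing S with hK
  set φ : S →+* K := algebraMap S K with hφ
  have hinj : Function.Injective φ := IsFractionRing.injective S K
  set lamK : Fin k → K := fun i => φ (MvPolynomial.X i) with hlamK
  have hd : Function.Injective lamK := hinj.comp (MvPolynomial.X_injective)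
  have hrootS : ∀ i : Fin k, (MvPolynomial.X i : S) ^ k =
      ∑ j : Fin k, coreCoeff k (MvPolynomial.X : Fin k → S) j *
        (MvPolynomial.X i : S) ^ (k - 1 - (j : ℕ)) := by
    intro i
    have h := congrArg (Polynomial.eval (MvPolynomial.X i : S))
      (core_eq_prod k (MvPolynomial.X : Fin k → S))
    simp only [Polynomial.eval_sub, Polynomial.eval_pow, Polynomial.eval_X,
      Polynomial.eval_finset_sum, Polynomial.eval_mul, Polynomial.eval_C,
      Polynomial.eval_prod] at h
    rw [Finset.prod_eq_zero (Finset.mem_univ i) (by simp)] at h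
    exact sub_eq_zero.mp h
  have hrootK : ∀ i : Fin k, lamK i ^ k =
      ∑ j : Fin k, φ (coreCoeff k (MvPolynomial.X : Fin k → S) j) *
        lamK i ^ (k - 1 - (j : ℕ)) := by
    intro i
    rw [hlamK, ← map_pow, hrootS i, map_sum]
    exact Finset.sum_congr rfl fun j _ => by rw [map_mul, map_pow]
  have h := field_case k (φ ∘ coreCoeff k (MvPolynomial.X : Fin k → S)) lamK hd hrootK n
  rw [← companion_map φ k, ← map_pow, trace_mapMatrix] at h
  apply hinj
  rw [h, map_sum]
  exact Finset.sum_congr rfl fun i _ => by rw [map_pow]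

/-- if the core polynomial splits with roots `λ_1, ..., λ_k`, then
`tr(A^n) = Σ_i λ_i^n`, the generalized Lucas polynomial (power-sum) evaluated
at `(t_1, ..., t_k)`. -/
theorem trace_companion_pow_eq_powerSum {R : Type*} [CommRing R] (k : ℕ)
    (t : Fin k → R) (lam : Fin k → R)
    (hsplit :
      (Polynomial.X ^ k -
          ∑ j : Fin k, Polynomial.C (t j) * Polynomial.X ^ (k - 1 - (j : ℕ))) =
        ∏ i : Fin k, (Polynomial.X - Polynomial.C (lam i))) :
    ∀ n : ℕ, (companion k t ^ n).trace = ∑ i : Fin k, lam i ^ n := by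
  intro n
  let φ : MvPolynomial (Fin k) ℤ →+* R :=
    (MvPolynomial.aeval lam : MvPolynomial (Fin k) ℤ →ₐ[ℤ] R).toRingHom
  have hφX : ∀ i, φ (MvPolynomial.X i) = lam i := fun i => by simp [φ]
  have hφt : ⇑φ ∘ coreCoeff k (MvPolynomial.X : Fin k → MvPolynomial (Fin k) ℤ) = t := by
    funext j
    simp only [Function.comp_apply, coreCoeff, map_neg]
    have hmap : Polynomial.map φ
        (∏ i : Fin k, (Polynomial.X - Polynomial.C (MvPolynomial.X i))) =
        ∏ i : Fin k, (Polynomial.X - Polynomial.C (lam i)) := by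
      rw [Polynomial.map_prod]
      exact Finset.prod_congr rfl fun i _ => by
        rw [Polynomial.map_sub, Polynomial.map_X, Polynomial.map_C, hφX]
    rw [← Polynomial.coeff_map, hmap, ← hsplit, core_coeff_eq, neg_neg]
  have h2 := congrArg φ (generic_case k n)
  rw [← trace_mapMatrix φ, map_pow, companion_map φ k, hφt] at h2
  rw [h2, map_sum]
  exact Finset.sum_congr rfl fun i _ => by rw [map_pow, hφX]
end

section
/- Let A be the companion matrix of X^k - t_1 X^{k-1} - ... - t_k over a commutative ring. Then for every n ≥ 0, the (k,k) entry of A^n equals the generalized Fibonacci polynomial F_{k,n}(t_1,...,t_k) = Σ_{α ⊢ n} multinomial(|α|; α_1,...,α_k) t_1^{α_1} ... t_k^{α_k}, where the sum is over nonnegative integer vectors (α_1,...,α_k) with Σ j·α_j = n. -/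
/-- The generalized Fibonacci polynomial
`F_{k,n}(t) = Σ_{α ⊢ n} multinomial(|α|; α) t_1^{α_1} ⋯ t_k^{α_k}`,
the sum over `α : Fin k → ℕ` with `Σ_j (j+1)·α_j = n`. -/
def genFib {R : Type*} [CommRing R] (k n : ℕ) (t : Fin k → R) : R :=
  ∑ α ∈ (Fintype.piFinset fun _ : Fin k => Finset.range (n + 1)).filter
      (fun α => ∑ j : Fin k, ((j : ℕ) + 1) * α j = n),
    (Nat.multinomial Finset.univ α : R) * ∏ j : Fin k, t j ^ α j


open Finset Nat

section
variable {R : Type*} [CommRing R] {k : ℕ}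

lemma mem_genFibSet {n : ℕ} {α : Fin k → ℕ} :
    α ∈ (Fintype.piFinset fun _ : Fin k => Finset.range (n + 1)).filter
      (fun α => ∑ j : Fin k, ((j : ℕ) + 1) * α j = n) ↔
    ∑ j : Fin k, ((j : ℕ) + 1) * α j = n := by
  constructor
  · exact fun h => (Finset.mem_filter.mp h).2
  · intro h
    refine Finset.mem_filter.mpr ⟨Fintype.mem_piFinset.mpr fun i => ?_, h⟩
    rw [Finset.mem_range]
    have h1 : ((i : ℕ) + 1) * α i ≤ n :=
      h ▸ Finset.single_le_sum (f := fun j : Fin k => ((j : ℕ) + 1) * α j)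
        (fun _ _ => Nat.zero_le _) (Finset.mem_univ i)
    have h2 : α i ≤ ((i : ℕ) + 1) * α i := Nat.le_mul_of_pos_left _ (Nat.succ_pos _)
    omega

lemma genFib_zero (t : Fin k → R) : genFib k 0 t = 1 := by
  have hset : (Fintype.piFinset fun _ : Fin k => Finset.range (0 + 1)).filter
      (fun α => ∑ j : Fin k, ((j : ℕ) + 1) * α j = 0) = {fun _ => 0} := by
    ext α
    rw [mem_genFibSet, Finset.mem_singleton]
    constructor
    · intro h
      funext i
      have h1 : ((i : ℕ) + 1) * α i ≤ 0 :=
        h ▸ Finset.single_le_sum (f := fun j : Fin k => ((j : ℕ) + 1) * α j)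
          (fun _ _ => Nat.zero_le _) (Finset.mem_univ i)
      have h2 := Nat.mul_eq_zero.mp (Nat.le_zero.mp h1)
      omega
    · rintro rfl; simp
  rw [genFib, hset, Finset.sum_singleton]
  simp [Nat.multinomial]

lemma multinomial_pascal (α : Fin k → ℕ) (h : 0 < ∑ j, α j) :
    Nat.multinomial Finset.univ α
      = ∑ j ∈ Finset.univ.filter (fun j => 0 < α j),
          Nat.multinomial Finset.univ (Function.update α j (α j - 1)) := by
  have hP : 0 < ∏ j, (α j)! := Finset.prod_pos fun _ _ => Nat.factorial_pos _
  refine Nat.eq_of_mul_eq_mul_left hP ?_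
  rw [Nat.multinomial_spec]
  have key : ∀ j ∈ Finset.univ.filter (fun j => 0 < α j),
      (∏ i, (α i)!) * Nat.multinomial Finset.univ (Function.update α j (α j - 1))
        = α j * (∑ i, α i - 1)! := by
    intro j hj
    have hj' : 0 < α j := (Finset.mem_filter.mp hj).2
    have hprod : ∏ i, (α i)! = α j * ∏ i, (Function.update α j (α j - 1) i)! := by
      rw [← Finset.mul_prod_erase univ _ (mem_univ j),
        ← Finset.mul_prod_erase univ (fun i => (Function.update α j (α j - 1) i)!) (mem_univ j),
        Function.update_self]
      have : (α j)! = α j * (α j - 1)! := by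
        obtain ⟨m, hm⟩ : ∃ m, α j = m + 1 := ⟨α j - 1, by omega⟩
        rw [hm]; simp [Nat.factorial_succ]
      rw [this, mul_assoc]
      congr 1
      congr 1
      exact Finset.prod_congr rfl fun i hi =>
        by rw [Function.update_of_ne (Finset.ne_of_mem_erase hi)]
    have hsum : ∑ i, Function.update α j (α j - 1) i = ∑ i, α i - 1 := by
      rw [Finset.sum_update_of_mem (mem_univ j), Finset.sdiff_singleton_eq_erase,
        ← Finset.add_sum_erase univ α (mem_univ j)]
      omega
    rw [hprod, mul_assoc, Nat.multinomial_spec, hsum]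
  rw [Finset.mul_sum, Finset.sum_congr rfl key, ← Finset.sum_mul,
    Finset.sum_filter_of_ne (by intro j _ hj; positivity)]
  obtain ⟨m, hm⟩ : ∃ m, ∑ j, α j = m + 1 := ⟨∑ j, α j - 1, by omega⟩
  rw [hm]; simp [Nat.factorial_succ]

end

section
variable {R : Type*} [CommRing R] {k : ℕ}

lemma weight_update (α : Fin k → ℕ) (j : Fin k) (v : ℕ) :
    ∑ i : Fin k, ((i : ℕ) + 1) * Function.update α j v i
      = ((j : ℕ) + 1) * v + ∑ i ∈ Finset.univ.erase j, ((i : ℕ) + 1) * α i := by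
  have h : (fun i : Fin k => ((i : ℕ) + 1) * Function.update α j v i)
      = Function.update (fun i : Fin k => ((i : ℕ) + 1) * α i) j (((j : ℕ) + 1) * v) := by
    funext i
    rcases eq_or_ne i j with rfl | h
    · simp
    · simp [Function.update_of_ne h]
  rw [h, Finset.sum_update_of_mem (mem_univ j), Finset.sdiff_singleton_eq_erase]

lemma genFib_succ (n : ℕ) (t : Fin k → R) :
    genFib k (n + 1) t
      = ∑ j : Fin k, if (j : ℕ) ≤ n then t j * genFib k (n - (j : ℕ)) t else 0 := by
  classical
  rw [genFib]
  have h1 : ∀ α ∈ (Fintype.piFinset fun _ : Fin k => Finset.range (n + 1 + 1)).filter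
      (fun α => ∑ j : Fin k, ((j : ℕ) + 1) * α j = n + 1),
      (Nat.multinomial Finset.univ α : R) * ∏ j : Fin k, t j ^ α j
        = ∑ j : Fin k, if 0 < α j then
            (Nat.multinomial Finset.univ (Function.update α j (α j - 1)) : R)
              * ∏ i : Fin k, t i ^ α i else 0 := by
    intro α hα
    have hw := mem_genFibSet.mp hα
    have hpos : 0 < ∑ j, α j := by
      by_contra hcon
      push_neg at hcon
      have hz : ∀ j, α j = 0 := by
        intro j
        have := Finset.single_le_sum (f := α) (fun _ _ => Nat.zero_le _) (Finset.mem_univ j)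
        omega
      simp [hz] at hw
    rw [multinomial_pascal α hpos, ← Finset.sum_filter, Nat.cast_sum, Finset.sum_mul]
  rw [Finset.sum_congr rfl h1, Finset.sum_comm]
  refine Finset.sum_congr rfl fun j _ => ?_
  rw [← Finset.sum_filter]
  by_cases hj : (j : ℕ) ≤ n
  · rw [if_pos hj, genFib, Finset.mul_sum]
    refine Finset.sum_nbij' (i := fun α => Function.update α j (α j - 1))
      (j := fun β => Function.update β j (β j + 1)) ?_ ?_ ?_ ?_ ?_
    · intro α hα
      obtain ⟨hα1, hαj⟩ := Finset.mem_filter.mp hα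
      have hw := mem_genFibSet.mp hα1
      apply mem_genFibSet.mpr
      obtain ⟨m, hm⟩ : ∃ m, α j = m + 1 := ⟨α j - 1, by omega⟩
      rw [weight_update]
      rw [← Finset.add_sum_erase univ _ (mem_univ j), hm, Nat.mul_succ] at hw
      simp only [hm, Nat.add_sub_cancel]
      omega
    · intro β hβ
      have hw := mem_genFibSet.mp hβ
      rw [Finset.mem_filter]
      constructor
      · apply mem_genFibSet.mpr
        rw [weight_update, Nat.mul_succ]
        rw [← Finset.add_sum_erase univ _ (mem_univ j)] at hw
        omega
      · simp
    · intro α hα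
      have hαj := (Finset.mem_filter.mp hα).2
      simp only [Function.update_idem, Function.update_self]
      rw [Nat.sub_add_cancel hαj, Function.update_eq_self]
    · intro β hβ
      simp only [Function.update_idem, Function.update_self, Nat.add_sub_cancel]
      rw [Function.update_eq_self]
    · intro α hα
      have hαj := (Finset.mem_filter.mp hα).2
      have hprod : ∏ i, t i ^ α i
          = t j * ∏ i, t i ^ (Function.update α j (α j - 1) i) := by
        rw [← Finset.mul_prod_erase univ _ (mem_univ j),
          ← Finset.mul_prod_erase univ (fun i => t i ^ (Function.update α j (α j - 1) i))
            (mem_univ j), Function.update_self]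
        obtain ⟨m, hm⟩ : ∃ m, α j = m + 1 := ⟨α j - 1, by omega⟩
        have he : ∏ x ∈ univ.erase j, t x ^ Function.update α j (α j - 1) x
            = ∏ x ∈ univ.erase j, t x ^ α x :=
          Finset.prod_congr rfl fun i hi =>
            by rw [Function.update_of_ne (Finset.ne_of_mem_erase hi)]
        rw [he, hm, Nat.add_sub_cancel, pow_succ]
        ring
      rw [hprod]; ring
  · rw [if_neg hj]
    convert Finset.sum_empty
    rw [Finset.eq_empty_iff_forall_notMem]
    intro α hα
    obtain ⟨hα1, hαj⟩ := Finset.mem_filter.mp hα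
    have hw := mem_genFibSet.mp hα1
    have h1 : ((j : ℕ) + 1) * α j ≤ n + 1 :=
      hw ▸ Finset.single_le_sum (f := fun i : Fin k => ((i : ℕ) + 1) * α i)
        (fun _ _ => Nat.zero_le _) (Finset.mem_univ j)
    have h2 : (j : ℕ) + 1 ≤ ((j : ℕ) + 1) * α j := Nat.le_mul_of_pos_right _ hαj
    omega

end

/-- the `(k,k)` entry of `A^n` is the generalized Fibonacci polynomial
`F_{k,n}(t_1,...,t_k)`. -/
theorem companion_pow_corner_eq_genFib {R : Type*} [CommRing R] (k : ℕ)
    (hk : 1 ≤ k) (t : Fin k → R) :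
    ∀ n : ℕ,
      (companion k t ^ n) ⟨k - 1, by omega⟩ ⟨k - 1, by omega⟩ = genFib k n t := by
  have hlt : k - 1 < k := by omega
  set lst : Fin k := ⟨k - 1, hlt⟩ with hlst
  have key : ∀ n : ℕ, ∀ i : Fin k,
      (companion k t ^ n) i lst
        = if k ≤ n + (i : ℕ) + 1 then genFib k (n + (i : ℕ) + 1 - k) t else 0 := by
    intro n
    induction n with
    | zero =>
      intro i
      rw [pow_zero]
      by_cases hi : i = lst
      · subst hi
        rw [Matrix.one_apply_eq, if_pos (by simp [hlst]; omega)]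
        have h0 : 0 + ((lst : Fin k) : ℕ) + 1 - k = 0 := by simp [hlst]; omega
        rw [h0, genFib_zero]
      · rw [Matrix.one_apply_ne hi]
        have hi' : (i : ℕ) < k - 1 := by
          have h1 := i.isLt
          rcases Nat.lt_or_ge (i : ℕ) (k - 1) with h | h
          · exact h
          · exact absurd (Fin.ext (by simp [hlst]; omega : (i : ℕ) = ((lst : Fin k) : ℕ))) hi
        rw [if_neg (by omega)]
    | succ n ih =>
      intro i
      have hps : companion k t ^ (n + 1) = companion k t * companion k t ^ n := pow_succ' _ _
      rw [hps, Matrix.mul_apply]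
      by_cases hi : (i : ℕ) + 1 = k
      · have hA : ∀ m : Fin k, companion k t i m = t m.rev := by
          intro m; simp [companion, hi]
        have hs : ∑ m : Fin k, companion k t i m * (companion k t ^ n) m lst
            = ∑ j : Fin k, t j * (companion k t ^ n) j.rev lst := by
          rw [Finset.sum_congr rfl fun m _ => by rw [hA m]]
          exact Fintype.sum_equiv Fin.revPerm _ _ fun m => by simp [Fin.rev_rev]
        rw [hs]
        have hterm : ∀ j : Fin k, t j * (companion k t ^ n) j.rev lst
            = if (j : ℕ) ≤ n then t j * genFib k (n - (j : ℕ)) t else 0 := by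
          intro j
          rw [ih j.rev]
          have hrv : ((j.rev : Fin k) : ℕ) = k - ((j : ℕ) + 1) := Fin.val_rev j
          have hjk := j.isLt
          by_cases hjn : (j : ℕ) ≤ n
          · rw [if_pos (by omega), if_pos hjn]
            congr 2
            omega
          · rw [if_neg (by omega), if_neg hjn, mul_zero]
        rw [Finset.sum_congr rfl fun j _ => hterm j, ← genFib_succ]
        have hik : (i : ℕ) = k - 1 := by omega
        rw [if_pos (by omega)]
        congr 1
        omega
      · have hik : (i : ℕ) + 1 < k := by have := i.isLt; omega
        set i' : Fin k := ⟨(i : ℕ) + 1, hik⟩ with hi'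
        have hs : ∑ m : Fin k, companion k t i m * (companion k t ^ n) m lst
            = (companion k t ^ n) i' lst := by
          rw [Finset.sum_eq_single i']
          · have : companion k t i i' = 1 := by simp [companion, hi, hi']
            rw [this, one_mul]
          · intro m _ hm
            have : companion k t i m = 0 := by
              have hmv : (m : ℕ) ≠ (i : ℕ) + 1 := by
                intro hc
                exact hm (Fin.ext (by simp [hi', hc]))
              simp [companion, hi, hmv]
            rw [this, zero_mul]
          · intro h; exact absurd (Finset.mem_univ i') h
        rw [hs, ih i']
        have : (i' : ℕ) = (i : ℕ) + 1 := rfl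
        by_cases hc : k ≤ n + 1 + (i : ℕ) + 1
        · rw [if_pos (by omega), if_pos hc]
          congr 1
          omega
        · rw [if_neg (by omega), if_neg hc]
  intro n
  have h := key n lst
  rw [if_pos (by simp [hlst]; omega)] at h
  have h2 : n + ((lst : Fin k) : ℕ) + 1 - k = n := by simp [hlst]; omega
  rw [h2] at h
  exact h
end

section
/- A linearly recursive integer sequence {f_n} with irreducible core polynomial C(X) = X^k - t_1 X^{k-1} - ... - t_k and generic initial conditions (f_0=1, f_{-1}=...=f_{-(k-1)}=0) is periodic (over Z, i.e., f_{n+c} = f_n for some c > 0 and all n) if and only if every complex root of C(X) is a root of unity. -/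
open Polynomial

noncomputable def shiftL : (ℕ → ℚ) →ₗ[ℚ] (ℕ → ℚ) where
  toFun g := fun n => g (n + 1)
  map_add' _ _ := rfl
  map_smul' _ _ := rfl

lemma shiftL_iter (m : ℕ) : ∀ (g : ℕ → ℚ) (n : ℕ), ((⇑shiftL)^[m] g) n = g (n + m) := by
  induction m with
  | zero => intro g n; rfl
  | succ m ih =>
    intro g n
    rw [Function.iterate_succ_apply, ih]
    show g (n + m + 1) = g (n + (m + 1))
    ring_nf

lemma shiftL_pow (m : ℕ) (g : ℕ → ℚ) (n : ℕ) : ((shiftL ^ m) g) n = g (n + m) := by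
  rw [Module.End.pow_apply, shiftL_iter]

/-- a linearly recursive integer sequence with irreducible core
polynomial `C(X) = X^k - t_1 X^{k-1} - ... - t_k` and generic initial conditions
is periodic over `ℤ` if and only if every complex root of `C` is a root of unity. -/
theorem gfp_periodic_iff_roots_of_unity
    (k : ℕ) (hk : 1 ≤ k) (t : Fin k → ℤ)
    (hirr : Irreducible
      (Polynomial.X ^ k -
        ∑ j : Fin k, Polynomial.C (t j) * Polynomial.X ^ (k - 1 - (j : ℕ))))
    (f : ℕ → ℤ)
    (h0 : ∀ j, j < k - 1 → f j = 0) (h1 : f (k - 1) = 1)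
    (hrec : ∀ n, k ≤ n → f n = ∑ j : Fin k, t j * f (n - 1 - (j : ℕ))) :
    (∃ c : ℕ, 0 < c ∧ ∀ n, f (n + c) = f n) ↔
      ∀ z : ℂ,
        Polynomial.aeval z
            (Polynomial.X ^ k -
              ∑ j : Fin k, Polynomial.C (t j) * Polynomial.X ^ (k - 1 - (j : ℕ))) = 0 →
          ∃ m : ℕ, 0 < m ∧ z ^ m = 1 := by
  set Cz : ℤ[X] :=
    X ^ k - ∑ j : Fin k, C (t j) * X ^ (k - 1 - (j : ℕ)) with hCz
  -- degree facts
  have hdegsum : (∑ j : Fin k, C (t j) * X ^ (k - 1 - (j : ℕ))).degree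
      < ((k : ℕ) : WithBot ℕ) := by
    refine lt_of_le_of_lt (degree_sum_le _ _) ?_
    rw [Finset.sup_lt_iff (by exact_mod_cast WithBot.bot_lt_coe k)]
    intro j _
    refine lt_of_le_of_lt (degree_C_mul_X_pow_le _ _) ?_
    exact_mod_cast Nat.lt_of_le_of_lt (Nat.sub_le _ _) (Nat.sub_lt_self one_pos hk)
  have hmonic : Cz.Monic := monic_X_pow_sub hdegsum
  have hCzdeg : Cz.degree = (k : ℕ) := by
    rw [hCz, degree_sub_eq_left_of_degree_lt, degree_X_pow]
    rwa [degree_X_pow]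
  -- the ℚ polynomial
  set Cq : ℚ[X] := Cz.map (algebraMap ℤ ℚ) with hCqdef
  have hCq_irr : Irreducible Cq :=
    (IsPrimitive.Int.irreducible_iff_irreducible_map_cast hmonic.isPrimitive).mp hirr
  -- the sequence over ℚ
  set F : ℕ → ℚ := fun n => (f n : ℚ) with hFdef
  -- the recurrence: Cq annihilates F via the shift operator
  have hannC : (aeval shiftL Cq) F = 0 := by
    rw [hCqdef, aeval_map_algebraMap]
    funext n
    have hrec' := hrec (n + k) (by omega)
    simp only [hCz, map_sub, map_sum, map_pow, map_mul, aeval_X, aeval_C,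
      LinearMap.sub_apply, Pi.sub_apply, LinearMap.coe_sum, Finset.sum_apply,
      Module.End.mul_apply, Module.algebraMap_end_apply, Pi.smul_apply,
      LinearMap.smul_apply, shiftL_pow, Pi.zero_apply]
    have hsum : ∀ j : Fin k, F (n + (k - 1 - (j : ℕ))) = F (n + k - 1 - (j : ℕ)) := by
      intro j
      congr 1
      have := j.2
      omega
    rw [Finset.sum_congr rfl fun j _ => by rw [hsum j]]
    have hFv : F (n + k) = ∑ j : Fin k, (t j : ℚ) * F (n + k - 1 - (j : ℕ)) := by
      simp only [hFdef]
      push_cast [hrec']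
      rfl
    rw [sub_eq_zero, hFv]
    refine Finset.sum_congr rfl fun j _ => ?_
    rw [zsmul_eq_mul]
  -- annihilation passes to multiples
  have hann_mul : ∀ q : ℚ[X], (aeval shiftL (Cq * q)) F = 0 := by
    intro q
    rw [mul_comm, map_mul, Module.End.mul_apply, hannC, map_zero]
  have hFne : F ≠ 0 := by
    intro h
    have := congrFun h (k - 1)
    rw [hFdef] at this
    simp [h1] at this
  -- dvd ↔ annihilation of X^c - 1
  have key_dvd : ∀ c : ℕ, (aeval shiftL ((X : ℚ[X]) ^ c - 1)) F = 0 → Cq ∣ (X : ℚ[X]) ^ c - 1 := by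
    intro c hann
    by_contra hdvd
    obtain ⟨a, b, hab⟩ := hCq_irr.coprime_iff_not_dvd.mpr hdvd
    have : (aeval shiftL (a * Cq + b * ((X : ℚ[X]) ^ c - 1))) F = F := by
      rw [hab]; simp
    rw [map_add, LinearMap.add_apply, map_mul, map_mul, Module.End.mul_apply,
      Module.End.mul_apply, hannC, hann, map_zero, map_zero, add_zero] at this
    exact hFne this.symm
  constructor
  · rintro ⟨c, hc, hper⟩ z hz
    have hann : (aeval shiftL ((X : ℚ[X]) ^ c - 1)) F = 0 := by
      funext n
      simp only [map_sub, map_pow, aeval_X, map_one, LinearMap.sub_apply,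
        Pi.sub_apply, Module.End.one_apply, shiftL_pow, Pi.zero_apply]
      rw [sub_eq_zero]
      simp only [hFdef]
      exact_mod_cast hper n
    obtain ⟨q, hq⟩ := key_dvd c hann
    refine ⟨c, hc, ?_⟩
    have : (aeval z) ((X : ℚ[X]) ^ c - 1) = 0 := by
      rw [hq, map_mul]
      have : (aeval z) Cq = 0 := by
        rw [hCqdef, aeval_map_algebraMap]
        exact hz
      rw [this, zero_mul]
    simpa [sub_eq_zero] using this
  · intro hroots
    -- find a complex root of Cz
    obtain ⟨z, hz⟩ : ∃ z : ℂ, (aeval z) Cz = 0 := by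
      have hdeg : 0 < (Cz.map (algebraMap ℤ ℂ)).degree := by
        rw [degree_map_eq_of_injective (algebraMap ℤ ℂ).injective_int, hCzdeg]
        exact_mod_cast hk
      obtain ⟨z, hz⟩ := Complex.exists_root hdeg
      exact ⟨z, by rwa [IsRoot, eval_map_algebraMap] at hz⟩
    obtain ⟨m, hm, hzm⟩ := hroots z hz
    -- Cq divides X^m - 1
    have hnc : ¬ IsCoprime Cq ((X : ℚ[X]) ^ m - 1) := by
      rintro ⟨a, b, hab⟩
      have := congrArg (aeval z) hab
      rw [map_add, map_mul, map_mul, map_one] at this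
      have h1' : (aeval z) Cq = 0 := by rw [hCqdef, aeval_map_algebraMap]; exact hz
      have h2' : (aeval z) ((X : ℚ[X]) ^ m - 1) = 0 := by simp [hzm]
      rw [h1', h2', mul_zero, mul_zero, add_zero] at this
      exact zero_ne_one this
    have hdvd : Cq ∣ (X : ℚ[X]) ^ m - 1 := by
      rcases (by by_cases hd : Cq ∣ (X : ℚ[X]) ^ m - 1
                 · exact Or.inr hd
                 · exact Or.inl (hCq_irr.coprime_iff_not_dvd.mpr hd) :
          IsCoprime Cq ((X : ℚ[X]) ^ m - 1) ∨ Cq ∣ (X : ℚ[X]) ^ m - 1) with h | h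
      · exact absurd h hnc
      · exact h
    obtain ⟨q, hq⟩ := hdvd
    have hann : (aeval shiftL ((X : ℚ[X]) ^ m - 1)) F = 0 := by
      rw [hq]; exact hann_mul q
    refine ⟨m, hm, fun n => ?_⟩
    have := congrFun hann n
    simp only [map_sub, map_pow, aeval_X, map_one, LinearMap.sub_apply,
      Pi.sub_apply, Module.End.one_apply, shiftL_pow, Pi.zero_apply] at this
    rw [sub_eq_zero] at this
    simp only [hFdef] at this
    exact_mod_cast this
end

section
/- Let Φ_n(X) be the n-th cyclotomic polynomial, of degree φ(n), written as X^{φ(n)} - t_1 X^{φ(n)-1} - ... - t_{φ(n)}. Then the associated generalized Fibonacci recursion f_m = Σ t_j f_{m-j} with f_0 = 1, f_{-j} = 0 for 0 < j < φ(n), is periodic with period dividing n, and n is its exact period. -/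
open Polynomial

/-- The shift endomorphism on integer sequences. -/
private def shiftE : Module.End ℤ (ℕ → ℤ) where
  toFun g := fun m => g (m + 1)
  map_add' _ _ := rfl
  map_smul' _ _ := rfl

private lemma shiftE_pow (k : ℕ) (g : ℕ → ℤ) (m : ℕ) :
    ((shiftE ^ k) g) m = g (m + k) := by
  induction k generalizing g with
  | zero => simp
  | succ k ih =>
    rw [pow_succ, Module.End.mul_apply, ih]
    rfl

private lemma aeval_shiftE_apply (p : ℤ[X]) (g : ℕ → ℤ) (m : ℕ) :
    ((Polynomial.aeval shiftE) p) g m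
      = ∑ i ∈ Finset.range (p.natDegree + 1), p.coeff i * g (m + i) := by
  rw [Polynomial.aeval_eq_sum_range]
  rw [LinearMap.coe_sum, Finset.sum_apply, Finset.sum_apply]
  refine Finset.sum_congr rfl fun i _ => ?_
  rw [LinearMap.smul_apply, Pi.smul_apply, shiftE_pow, smul_eq_mul]

/-- writing the `n`-th cyclotomic polynomial as
`X^{φ(n)} - t_1 X^{φ(n)-1} - ... - t_{φ(n)}`, the associated generalized Fibonacci
recursion is periodic with exact (least) period `n`. -/
theorem gfp_cyclotomic_period
    (n : ℕ) (hn : 0 < n) (t : Fin (Nat.totient n) → ℤ)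
    (hcyc : Polynomial.cyclotomic n ℤ =
      Polynomial.X ^ (Nat.totient n) -
        ∑ j : Fin (Nat.totient n),
          Polynomial.C (t j) * Polynomial.X ^ (Nat.totient n - 1 - (j : ℕ)))
    (f : ℕ → ℤ)
    (h0 : ∀ j, j < Nat.totient n - 1 → f j = 0) (h1 : f (Nat.totient n - 1) = 1)
    (hrec : ∀ m, Nat.totient n ≤ m →
      f m = ∑ j : Fin (Nat.totient n), t j * f (m - 1 - (j : ℕ))) :
    IsLeast {c : ℕ | 0 < c ∧ ∀ m, f (m + c) = f m} n := by
  have hdpos : 0 < Nat.totient n := Nat.totient_pos.2 hn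
  set T : Module.End ℤ (ℕ → ℤ) := shiftE with hT
  -- the cyclotomic polynomial annihilates `f` (acting via the shift)
  have hPhi : (Polynomial.aeval T (Polynomial.cyclotomic n ℤ)) f = 0 := by
    funext m
    have hr := hrec (m + Nat.totient n) (by omega)
    rw [hcyc, map_sub, map_pow, Polynomial.aeval_X, map_sum]
    simp only [map_mul, Polynomial.aeval_C, map_pow, Polynomial.aeval_X]
    rw [LinearMap.sub_apply, Pi.sub_apply, LinearMap.coe_sum, Finset.sum_apply,
      Finset.sum_apply, shiftE_pow]
    have hterm : ∀ j : Fin (Nat.totient n),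
        ((algebraMap ℤ (Module.End ℤ (ℕ → ℤ)) (t j) * T ^ (Nat.totient n - 1 - (j : ℕ))) f) m
          = t j * f (m + Nat.totient n - 1 - (j : ℕ)) := by
      intro j
      rw [Module.End.mul_apply, Module.algebraMap_end_apply, Pi.smul_apply,
        shiftE_pow, smul_eq_mul]
      congr 2
      have := j.isLt
      omega
    have hsum : (∑ j : Fin (Nat.totient n),
        ((algebraMap ℤ (Module.End ℤ (ℕ → ℤ)) (t j) * T ^ (Nat.totient n - 1 - (j : ℕ))) f) m)
        = ∑ j : Fin (Nat.totient n), t j * f (m + Nat.totient n - 1 - (j : ℕ)) :=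
      Finset.sum_congr rfl fun j _ => hterm j
    rw [hsum, ← hr]
    simp
  -- any polynomial multiple of the cyclotomic polynomial annihilates `f`
  have hmul : ∀ q : ℤ[X], (Polynomial.aeval T (Polynomial.cyclotomic n ℤ * q)) f = 0 := by
    intro q
    rw [mul_comm, map_mul, Module.End.mul_apply, hPhi, map_zero]
  constructor
  · -- n is a period
    refine ⟨hn, fun m => ?_⟩
    obtain ⟨q, hq⟩ := Polynomial.cyclotomic.dvd_X_pow_sub_one n ℤ
    have h := congrFun (hmul q) m
    rw [← hq] at h
    rw [map_sub, map_pow, Polynomial.aeval_X, map_one] at h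
    rw [LinearMap.sub_apply, Pi.sub_apply, shiftE_pow] at h
    have h1T : ((1 : Module.End ℤ (ℕ → ℤ)) f) m = f m := rfl
    rw [h1T] at h
    simp only [Pi.zero_apply] at h
    linarith
  · -- n is the least period
    rintro c ⟨hc, hper⟩
    -- `X^c - 1` annihilates `f`
    have hXc : (Polynomial.aeval T ((Polynomial.X : ℤ[X]) ^ c - 1)) f = 0 := by
      funext m
      rw [map_sub, map_pow, Polynomial.aeval_X, map_one, LinearMap.sub_apply,
        Pi.sub_apply, shiftE_pow]
      have h1T : ((1 : Module.End ℤ (ℕ → ℤ)) f) m = f m := rfl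
      rw [h1T, hper m, sub_self]
      rfl
    -- the remainder of `X^c - 1` mod the cyclotomic polynomial annihilates `f`
    have hmonic : (Polynomial.cyclotomic n ℤ).Monic := Polynomial.cyclotomic.monic n ℤ
    set r : ℤ[X] := ((Polynomial.X : ℤ[X]) ^ c - 1) %ₘ Polynomial.cyclotomic n ℤ with hrdef
    have hradd := Polynomial.modByMonic_add_div ((Polynomial.X : ℤ[X]) ^ c - 1) (Polynomial.cyclotomic n ℤ)
    have hrann : (Polynomial.aeval T r) f = 0 := by
      have hrw : r = ((Polynomial.X : ℤ[X]) ^ c - 1) -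
          Polynomial.cyclotomic n ℤ *
            (((Polynomial.X : ℤ[X]) ^ c - 1) /ₘ Polynomial.cyclotomic n ℤ) := by
        rw [eq_sub_iff_add_eq]; exact hradd
      rw [hrw, map_sub, LinearMap.sub_apply, hXc, hmul, sub_zero]
    have hr0 : r = 0 := by
      by_contra hrne
      have hdeg : r.natDegree < Nat.totient n := by
        have hlt := Polynomial.degree_modByMonic_lt ((Polynomial.X : ℤ[X]) ^ c - 1) hmonic
        have := Polynomial.natDegree_lt_natDegree hrne hlt
        rwa [Polynomial.natDegree_cyclotomic] at this
      have hsum := congrFun hrann (Nat.totient n - 1 - r.natDegree)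
      rw [aeval_shiftE_apply, Finset.sum_range_succ] at hsum
      have hz : ∀ i ∈ Finset.range r.natDegree,
          r.coeff i * f (Nat.totient n - 1 - r.natDegree + i) = 0 := by
        intro i hi
        rw [Finset.mem_range] at hi
        rw [h0 _ (by omega), mul_zero]
      rw [Finset.sum_eq_zero hz, zero_add] at hsum
      have hidx : Nat.totient n - 1 - r.natDegree + r.natDegree = Nat.totient n - 1 := by omega
      rw [hidx, h1, mul_one] at hsum
      simp only [Pi.zero_apply] at hsum
      exact hrne (Polynomial.leadingCoeff_eq_zero.mp hsum)
    have hdvd : Polynomial.cyclotomic n ℤ ∣ (Polynomial.X : ℤ[X]) ^ c - 1 :=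
      (Polynomial.modByMonic_eq_zero_iff_dvd hmonic).1 hr0
    have hdvdC : Polynomial.cyclotomic n ℂ ∣ (Polynomial.X : ℂ[X]) ^ c - 1 := by
      have := Polynomial.map_dvd (Int.castRingHom ℂ) hdvd
      rwa [Polynomial.map_cyclotomic, Polynomial.map_sub, Polynomial.map_pow,
        Polynomial.map_X, Polynomial.map_one] at this
    have hζ := Complex.isPrimitiveRoot_exp n hn.ne'
    have hroot := hζ.isRoot_cyclotomic hn
    have hrootc : ((Polynomial.X : ℂ[X]) ^ c - 1).IsRoot
        (Complex.exp (2 * Real.pi * Complex.I / n)) := hroot.dvd hdvdC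
    have hpow : (Complex.exp (2 * Real.pi * Complex.I / n)) ^ c = 1 := by
      have := hrootc
      rw [Polynomial.IsRoot, Polynomial.eval_sub, Polynomial.eval_pow,
        Polynomial.eval_X, Polynomial.eval_one, sub_eq_zero] at this
      exact this
    exact Nat.le_of_dvd hc (hζ.dvd_of_pow_eq_one c hpow)
end

section
/- For the generalized Fibonacci polynomials F_{k,n}(t_1,...,t_k) and generalized Lucas polynomials G_{k,n}(t_1,...,t_k), the partial derivative identity ∂G_{k,n}/∂t_j = n · F_{k,n-j} holds for all n ≥ 1 and 1 ≤ j ≤ k. -/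
open MvPolynomial Finset

variable {k : ℕ}

lemma prod_fact_update (β : Fin k → ℕ) (j : Fin k) :
    ∏ i, Nat.factorial (Function.update β j (β j + 1) i) = (β j + 1) * ∏ i, Nat.factorial (β i) := by
  have h1 : (fun i => Nat.factorial (Function.update β j (β j + 1) i)) =
      Function.update (fun i => Nat.factorial (β i)) j (Nat.factorial (β j + 1)) := by
    ext i
    rcases eq_or_ne i j with rfl | h
    · simp
    · simp [Function.update_of_ne h]
  rw [h1, Finset.prod_update_of_mem (mem_univ j),
    Finset.prod_eq_prod_diff_singleton_mul (mem_univ j) (fun i => Nat.factorial (β i)),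
    Nat.factorial_succ]
  ring

lemma sum_update_succ (β : Fin k → ℕ) (j : Fin k) :
    ∑ i, Function.update β j (β j + 1) i = (∑ i, β i) + 1 := by
  rw [Finset.sum_update_of_mem (mem_univ j),
    Finset.sum_eq_sum_sdiff_singleton_add (mem_univ j) β]
  ring

lemma mult_update (β : Fin k → ℕ) (j : Fin k) :
    Nat.multinomial Finset.univ (Function.update β j (β j + 1)) * (β j + 1)
      = ((∑ i, β i) + 1) * Nat.multinomial Finset.univ β := by
  have hP : 0 < ∏ i, Nat.factorial (β i) := Finset.prod_pos fun i _ => Nat.factorial_pos _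
  apply Nat.eq_of_mul_eq_mul_left hP
  calc (∏ i, Nat.factorial (β i)) * (Nat.multinomial Finset.univ (Function.update β j (β j + 1)) * (β j + 1))
      = (∏ i, Nat.factorial (Function.update β j (β j + 1) i)) *
          Nat.multinomial Finset.univ (Function.update β j (β j + 1)) := by
        rw [prod_fact_update]; ring
    _ = Nat.factorial (∑ i, Function.update β j (β j + 1) i) := Nat.multinomial_spec _ _
    _ = Nat.factorial ((∑ i, β i) + 1) := by rw [sum_update_succ]
    _ = ((∑ i, β i) + 1) * (Nat.factorial (∑ i, β i)) := Nat.factorial_succ _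
    _ = ((∑ i, β i) + 1) * ((∏ i, Nat.factorial (β i)) * Nat.multinomial Finset.univ β) := by
        rw [Nat.multinomial_spec]
    _ = (∏ i, Nat.factorial (β i)) * (((∑ i, β i) + 1) * Nat.multinomial Finset.univ β) := by ring

lemma sum_weight_update (β : Fin k → ℕ) (j : Fin k) :
    ∑ i : Fin k, ((i : ℕ) + 1) * Function.update β j (β j + 1) i
      = (∑ i : Fin k, ((i : ℕ) + 1) * β i) + ((j : ℕ) + 1) := by
  have h1 : (fun i : Fin k => ((i : ℕ) + 1) * Function.update β j (β j + 1) i) =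
      Function.update (fun i : Fin k => ((i : ℕ) + 1) * β i) j (((j : ℕ) + 1) * (β j + 1)) := by
    ext i
    rcases eq_or_ne i j with rfl | h
    · simp
    · simp [Function.update_of_ne h]
  rw [h1, Finset.sum_update_of_mem (mem_univ j),
    Finset.sum_eq_sum_sdiff_singleton_add (mem_univ j) (fun i : Fin k => ((i : ℕ) + 1) * β i)]
  ring

lemma mem_S_iff (n : ℕ) (α : Fin k → ℕ) :
    α ∈ (Fintype.piFinset fun _ : Fin k => Finset.range (n + 1)).filter
      (fun α => ∑ j : Fin k, ((j : ℕ) + 1) * α j = n) ↔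
      ∑ j : Fin k, ((j : ℕ) + 1) * α j = n := by
  simp only [Finset.mem_filter, Fintype.mem_piFinset, Finset.mem_range, Nat.lt_succ_iff,
    and_iff_right_iff_imp]
  intro h i
  calc α i ≤ ((i : ℕ) + 1) * α i := Nat.le_mul_of_pos_left _ (Nat.succ_pos _)
    _ ≤ ∑ j : Fin k, ((j : ℕ) + 1) * α j :=
        Finset.single_le_sum (f := fun j : Fin k => ((j : ℕ) + 1) * α j) (fun i _ => Nat.zero_le _) (mem_univ i)
    _ = n := h

lemma prod_X_pow (α : Fin k → ℕ) :
    ∏ i : Fin k, (X i : MvPolynomial (Fin k) ℚ) ^ α i =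
      monomial (Finsupp.equivFunOnFinite.symm α) 1 := by
  rw [← prod_X_pow_eq_monomial]
  symm
  apply Finset.prod_subset (Finset.subset_univ _)
  intro i _ hi
  have : α i = 0 := by simpa using (Finsupp.notMem_support_iff.mp hi)
  simp [this]

/-- The generalized Fibonacci polynomial `F_{k,n}` as a polynomial in the
variables `t_1, ..., t_k` (here `X j` denotes `t_{j+1}`). -/
noncomputable def genFibPoly (k n : ℕ) : MvPolynomial (Fin k) ℚ :=
  ∑ α ∈ (Fintype.piFinset fun _ : Fin k => Finset.range (n + 1)).filter
      (fun α => ∑ j : Fin k, ((j : ℕ) + 1) * α j = n),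
    (Nat.multinomial Finset.univ α : ℚ) • ∏ j : Fin k, (X j : MvPolynomial (Fin k) ℚ) ^ α j

/-- The generalized Lucas polynomial `G_{k,n}`, with coefficients
`(n/|α|)·multinomial(|α|; α)`. -/
noncomputable def genLucasPoly (k n : ℕ) : MvPolynomial (Fin k) ℚ :=
  ∑ α ∈ (Fintype.piFinset fun _ : Fin k => Finset.range (n + 1)).filter
      (fun α => ∑ j : Fin k, ((j : ℕ) + 1) * α j = n),
    (((n : ℚ) / (∑ j : Fin k, (α j : ℚ))) * (Nat.multinomial Finset.univ α : ℚ)) •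
      ∏ j : Fin k, (X j : MvPolynomial (Fin k) ℚ) ^ α j

/-- `∂G_{k,n}/∂t_j = n · F_{k,n-j}` for `n ≥ 1` and `1 ≤ j ≤ k`
(with the convention `F_{k,m} = 0` for `m < 0`; here `j : Fin k` denotes `t_{j+1}`). -/
theorem pderiv_genLucasPoly (k n : ℕ) (hn : 1 ≤ n) (j : Fin k) :
    pderiv j (genLucasPoly k n) =
      if (j : ℕ) + 1 ≤ n then (n : ℚ) • genFibPoly k (n - ((j : ℕ) + 1)) else 0 := by
  classical
  unfold genLucasPoly
  rw [map_sum]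
  have hterm : ∀ α : Fin k → ℕ,
      pderiv j ((((n : ℚ) / (∑ i : Fin k, (α i : ℚ))) * (Nat.multinomial Finset.univ α : ℚ)) •
        ∏ i : Fin k, (X i : MvPolynomial (Fin k) ℚ) ^ α i)
      = monomial (Finsupp.equivFunOnFinite.symm α - Finsupp.single j 1)
          ((((n : ℚ) / (∑ i : Fin k, (α i : ℚ))) * (Nat.multinomial Finset.univ α : ℚ))
            * (α j : ℚ)) := by
    intro α
    rw [prod_X_pow, (pderiv j).map_smul, pderiv_monomial, smul_monomial]
    simp [mul_assoc]
  rw [Finset.sum_congr rfl fun α _ => hterm α]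
  by_cases hjn : (j : ℕ) + 1 ≤ n
  · rw [if_pos hjn]
    set m := n - ((j : ℕ) + 1) with hm
    rw [genFibPoly, Finset.smul_sum]
    have hrhs : ∀ α : Fin k → ℕ,
        (n : ℚ) • ((Nat.multinomial Finset.univ α : ℚ) •
          ∏ i : Fin k, (X i : MvPolynomial (Fin k) ℚ) ^ α i)
        = monomial (Finsupp.equivFunOnFinite.symm α)
            ((n : ℚ) * (Nat.multinomial Finset.univ α : ℚ)) := by
      intro α
      rw [prod_X_pow, smul_smul, smul_monomial, smul_eq_mul, mul_one]
    rw [Finset.sum_congr rfl fun α _ => hrhs α]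
    rw [← Finset.sum_filter_of_ne (p := fun α : Fin k → ℕ => α j ≠ 0)
      (fun α _ hne h0 => by simp [h0] at hne)]
    refine Finset.sum_nbij' (fun α => Function.update α j (α j - 1))
      (fun β => Function.update β j (β j + 1)) ?_ ?_ ?_ ?_ ?_
    · -- forward membership
      intro α hα
      rw [Finset.mem_filter] at hα
      obtain ⟨hα1, hα2⟩ := hα
      rw [mem_S_iff] at hα1 ⊢
      set β := Function.update α j (α j - 1) with hβ
      have hαβ : α = Function.update β j (β j + 1) := by
        ext i
        rcases eq_or_ne i j with rfl | h
        · simp [hβ]; omega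
        · simp [hβ, Function.update_of_ne h]
      rw [hαβ, sum_weight_update] at hα1
      exact Nat.eq_sub_of_add_eq hα1
    · -- backward membership
      intro β hβ
      rw [mem_S_iff] at hβ
      rw [Finset.mem_filter, mem_S_iff, sum_weight_update, hβ]
      constructor
      · omega
      · simp
    · intro α hα
      rw [Finset.mem_filter] at hα
      ext i
      rcases eq_or_ne i j with rfl | h
      · have := hα.2; simp; omega
      · simp [Function.update_of_ne h]
    · intro β _
      ext i
      rcases eq_or_ne i j with rfl | h
      · simp
      · simp [Function.update_of_ne h]
    · -- values agree
      intro α hα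
      rw [Finset.mem_filter, mem_S_iff] at hα
      obtain ⟨hα1, hα2⟩ := hα
      set β := Function.update α j (α j - 1) with hβdef
      have hαβ : α = Function.update β j (β j + 1) := by
        ext i
        rcases eq_or_ne i j with rfl | h
        · simp [hβdef]; omega
        · simp [hβdef, Function.update_of_ne h]
      have hsum : ∑ i, α i = (∑ i, β i) + 1 := by rw [hαβ, sum_update_succ]
      have hmult : Nat.multinomial Finset.univ α * α j
          = ((∑ i, β i) + 1) * Nat.multinomial Finset.univ β := by
        have := mult_update β j
        rw [← hαβ] at this
        have hαj : β j + 1 = α j := by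
          simp [hβdef]; omega
        rw [hαj] at this
        exact this
      have hfs : Finsupp.equivFunOnFinite.symm α - Finsupp.single j 1
          = Finsupp.equivFunOnFinite.symm β := by
        ext i
        rcases eq_or_ne i j with rfl | h
        · simp [hβdef, Finsupp.single_apply]
        · simp [hβdef, Function.update_of_ne h, Finsupp.single_apply, Ne.symm h]
      rw [hfs]
      congr 1
      -- coefficient identity
      have hc : (∑ i : Fin k, (α i : ℚ)) = ((∑ i, α i : ℕ) : ℚ) := by push_cast; ring
      have hS0 : ((∑ i, α i : ℕ) : ℚ) ≠ 0 := by
        have h1 : 1 ≤ ∑ i, α i := by omega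
        exact_mod_cast Nat.one_le_iff_ne_zero.mp h1
      have hmq : (Nat.multinomial Finset.univ α : ℚ) * (α j : ℚ)
          = ((∑ i, α i : ℕ) : ℚ) * (Nat.multinomial Finset.univ β : ℚ) := by
        rw [hsum]; exact_mod_cast congrArg (Nat.cast : ℕ → ℚ) hmult
      rw [hc, div_mul_eq_mul_div, div_mul_eq_mul_div, div_eq_iff hS0]
      push_cast at hmq ⊢
      linear_combination (n : ℚ) * hmq
  · rw [if_neg hjn]
    apply Finset.sum_eq_zero
    intro α hα
    rw [mem_S_iff] at hα
    have hαj : α j = 0 := by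
      by_contra h0
      have h1 : ((j : ℕ) + 1) * α j ≤ n := hα ▸
        Finset.single_le_sum (f := fun i : Fin k => ((i : ℕ) + 1) * α i)
          (fun i _ => Nat.zero_le _) (mem_univ j)
      have h2 : ((j : ℕ) + 1) ≤ ((j : ℕ) + 1) * α j :=
        Nat.le_mul_of_pos_right _ (Nat.pos_of_ne_zero h0)
      omega
    simp [hαj]
end
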